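/- Let (A,L) be a compact quantum metric space of radius r, and let π : A → B be a morphism of order-unit spaces, where B has at least one state. Then for every a ∈ A, ‖a‖ ≤ ‖π(a)‖ + 2r·L(a). -/

import Mathlib

open scoped ENNReal

/-- An order-unit space in the sense of Kadison: a partially ordered real vector
space with a positive order unit `e` satisfying the order-unit property and the
Archimedean property. -/
structure OrderUnitSpace : Type 1 where
  carrier : Type
  [toAddCommGroup : AddCommGroup carrier]
  [toModule : Module ℝ carrier]
  [toPartialOrder : PartialOrder carrier]
  add_le_add_left' : ∀ a b : carrier, a ≤ b → ∀ c : carrier, c + a ≤ c + b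
  smul_nonneg' : ∀ (r : ℝ) (a : carrier), 0 ≤ r → 0 ≤ a → 0 ≤ r • a
  e : carrier
  e_nonneg : 0 ≤ e
  orderUnit : ∀ a : carrier, ∃ r : ℝ, a ≤ r • e
  arch : ∀ a : carrier, (∀ r : ℝ, 0 < r → a ≤ r • e) → a ≤ 0

attribute [instance] OrderUnitSpace.toAddCommGroup OrderUnitSpace.toModule
  OrderUnitSpace.toPartialOrder

/-- The topology generated by the open balls of a distance function. -/
def ballTopology {S : Type*} (ρ : S → S → ℝ≥0∞) : TopologicalSpace S :=
  TopologicalSpace.generateFrom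
    {U : Set S | ∃ (μ : S) (ε : ℝ≥0∞), 0 < ε ∧ U = {ν | ρ μ ν < ε}}

/-- The quotient seminorm of `L` along the surjection `π`. -/
noncomputable def quotientSeminorm {α β : Type*} (π : α → β) (L : α → ℝ) (b : β) : ℝ :=
  sInf {r : ℝ | ∃ a, π a = b ∧ L a = r}

/-- `L` induces `LB` via `π`, i.e. `LB` is the quotient seminorm of `L` for `π`. -/
def Induces {α β : Type*} (π : α → β) (L : α → ℝ) (LB : β → ℝ) : Prop :=
  ∀ b, LB b = quotientSeminorm π L b

/-- Hausdorff distance between two subsets with respect to a distance function. -/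
noncomputable def hausdorffDistWith {S : Type*} (ρ : S → S → ℝ≥0∞) (T U : Set S) : ℝ≥0∞ :=
  max (⨆ t ∈ T, ⨅ u ∈ U, ρ t u) (⨆ u ∈ U, ⨅ t ∈ T, ρ t u)

namespace OrderUnitSpace

variable (A B : OrderUnitSpace)

theorem le_of_sub_nonneg'' {x y : A.carrier} (h : 0 ≤ y - x) : x ≤ y := by
  have h2 := A.add_le_add_left' 0 (y - x) h x
  have h3 : x + (y - x) = y := by abel
  rw [add_zero, h3] at h2
  exact h2

theorem smul_e_mono {r s : ℝ} (h : r ≤ s) : r • A.e ≤ s • A.e := by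
  apply A.le_of_sub_nonneg''
  have h3 : s • A.e - r • A.e = (s - r) • A.e := by rw [sub_smul]
  rw [h3]
  exact A.smul_nonneg' _ _ (by linarith) A.e_nonneg

/-- The order-unit norm. -/
noncomputable def onorm (a : A.carrier) : ℝ :=
  sInf {r : ℝ | -(r • A.e) ≤ a ∧ a ≤ r • A.e}

/-- A state: a unital positive linear functional. -/
def IsState (μ : A.carrier →ₗ[ℝ] ℝ) : Prop :=
  μ A.e = 1 ∧ ∀ a : A.carrier, 0 ≤ a → 0 ≤ μ a

/-- The state space. -/
def State : Type := {μ : A.carrier →ₗ[ℝ] ℝ // A.IsState μ}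

/-- The weak-* topology on the state space. -/
instance : TopologicalSpace A.State :=
  TopologicalSpace.induced (fun μ : A.State => (μ.1 : A.carrier → ℝ)) Pi.topologicalSpace

/-- The metric `ρ_L` on the state space defined by a seminorm `L`. -/
noncomputable def rho (L : Seminorm ℝ A.carrier) (μ ν : A.State) : ℝ≥0∞ :=
  ⨆ a : {a : A.carrier // L a ≤ 1}, ENNReal.ofReal |μ.1 a.1 - ν.1 a.1|

/-- A Lipschitz seminorm: its null space is exactly `ℝ e`. -/
def IsLipschitz (L : Seminorm ℝ A.carrier) : Prop :=
  ∀ a : A.carrier, L a = 0 ↔ ∃ t : ℝ, a = t • A.e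

/-- A Lip-norm: a Lipschitz seminorm whose metric `ρ_L` induces the weak-* topology. -/
def IsLipNorm (L : Seminorm ℝ A.carrier) : Prop :=
  A.IsLipschitz L ∧ ballTopology (A.rho L) = (inferInstance : TopologicalSpace A.State)

/-- The diameter of the state space for `ρ_L`. -/
noncomputable def diam (L : Seminorm ℝ A.carrier) : ℝ≥0∞ :=
  ⨆ (μ : A.State) (ν : A.State), A.rho L μ ν

/-- The radius: half the diameter. -/
noncomputable def radius (L : Seminorm ℝ A.carrier) : ℝ≥0∞ := A.diam L / 2

/-- Morphism of order-unit spaces: a unital positive linear map. -/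
def IsMorphism (f : A.carrier →ₗ[ℝ] B.carrier) : Prop :=
  f A.e = B.e ∧ ∀ a : A.carrier, 0 ≤ a → 0 ≤ f a

/-- Pull back a state along a morphism; this is `S(π)`. -/
noncomputable def pullState (f : A.carrier →ₗ[ℝ] B.carrier) (hf : A.IsMorphism B f)
    (μ : B.State) : A.State :=
  ⟨(μ.1).comp f, by
    constructor
    · rw [LinearMap.comp_apply, hf.1]; exact μ.2.1
    · intro a ha; exact μ.2.2 _ (hf.2 a ha)⟩

/-- The direct sum `A ⊕ B` as an order-unit space. -/
@[reducible] def prod : OrderUnitSpace where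
  carrier := A.carrier × B.carrier
  add_le_add_left' := by
    intro a b hab c
    rw [Prod.le_def] at hab ⊢
    exact ⟨A.add_le_add_left' _ _ hab.1 _, B.add_le_add_left' _ _ hab.2 _⟩
  smul_nonneg' := by
    intro r a hr ha
    rw [Prod.le_def] at ha ⊢
    exact ⟨A.smul_nonneg' r a.1 hr ha.1, B.smul_nonneg' r a.2 hr ha.2⟩
  e := (A.e, B.e)
  e_nonneg := by
    rw [Prod.le_def]
    exact ⟨A.e_nonneg, B.e_nonneg⟩
  orderUnit := by
    intro a
    obtain ⟨r₁, h1⟩ := A.orderUnit a.1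
    obtain ⟨r₂, h2⟩ := B.orderUnit a.2
    refine ⟨max r₁ r₂, ?_⟩
    rw [Prod.le_def]
    exact ⟨le_trans h1 (A.smul_e_mono (le_max_left _ _)),
      le_trans h2 (B.smul_e_mono (le_max_right _ _))⟩
  arch := by
    intro a h
    rw [Prod.le_def]
    exact ⟨A.arch a.1 fun r hr => ((Prod.le_def.mp (h r hr)).1),
      B.arch a.2 fun r hr => ((Prod.le_def.mp (h r hr)).2)⟩

/-- The embedding of `S(A)` into `S(A ⊕ B)` dual to the first coordinate projection. -/
noncomputable def leftState (μ : A.State) : (A.prod B).State :=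
  ⟨(μ.1).comp (LinearMap.fst ℝ A.carrier B.carrier), by
    constructor
    · exact μ.2.1
    · intro p hp; exact μ.2.2 p.1 hp.1⟩

/-- The embedding of `S(B)` into `S(A ⊕ B)` dual to the second coordinate projection. -/
noncomputable def rightState (ν : B.State) : (A.prod B).State :=
  ⟨(ν.1).comp (LinearMap.snd ℝ A.carrier B.carrier), by
    constructor
    · exact ν.2.1
    · intro p hp; exact ν.2.2 p.2 hp.2⟩

/-- The set `M(L_A, L_B)` of Lip-norms on `A ⊕ B` inducing `L_A` and `L_B`
via the coordinate projections. -/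
def admissible (LA : Seminorm ℝ A.carrier) (LB : Seminorm ℝ B.carrier) :
    Set (Seminorm ℝ (A.prod B).carrier) :=
  {L | (A.prod B).IsLipNorm L ∧
    Induces (Prod.fst : A.carrier × B.carrier → A.carrier) (fun p => L p) (fun a => LA a) ∧
    Induces (Prod.snd : A.carrier × B.carrier → B.carrier) (fun p => L p) (fun b => LB b)}

/-- Quantum Gromov–Hausdorff distance. -/
noncomputable def distq (LA : Seminorm ℝ A.carrier) (LB : Seminorm ℝ B.carrier) : ℝ≥0∞ :=
  ⨅ L ∈ A.admissible B LA LB,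
    hausdorffDistWith ((A.prod B).rho L) (Set.range (A.leftState B)) (Set.range (A.rightState B))

end OrderUnitSpace

section Helpers

namespace OrderUnitSpace

variable (A : OrderUnitSpace)

theorem sub_nonneg_of_le' {x y : A.carrier} (h : x ≤ y) : 0 ≤ y - x := by
  have h2 := A.add_le_add_left' x y h (-x)
  rw [neg_add_cancel] at h2
  have h3 : -x + y = y - x := by abel
  rwa [h3] at h2

theorem smul_mono' {c : ℝ} (hc : 0 ≤ c) {x y : A.carrier} (h : x ≤ y) :
    c • x ≤ c • y := by
  apply A.le_of_sub_nonneg''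
  have h1 : c • y - c • x = c • (y - x) := by rw [smul_sub]
  rw [h1]
  exact A.smul_nonneg' _ _ hc (A.sub_nonneg_of_le' h)

theorem state_mono (μ : A.State) {x y : A.carrier} (h : x ≤ y) : μ.1 x ≤ μ.1 y := by
  have h1 := μ.2.2 _ (A.sub_nonneg_of_le' h)
  rw [map_sub] at h1
  linarith

/-- The "upper" sublinear functional `p(x) = inf { r | x ≤ r e }`. -/
noncomputable def psub (x : A.carrier) : ℝ := sInf {r : ℝ | x ≤ r • A.e}

theorem psub_set_nonempty (x : A.carrier) : {r : ℝ | x ≤ r • A.e}.Nonempty :=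
  A.orderUnit x

theorem state_smul_e (μ : A.State) (s : ℝ) : μ.1 (s • A.e) = s := by
  rw [map_smul, smul_eq_mul, μ.2.1, mul_one]

theorem psub_set_bddBelow (μ : A.State) (x : A.carrier) :
    BddBelow {r : ℝ | x ≤ r • A.e} := by
  refine ⟨μ.1 x, fun s hs => ?_⟩
  have h1 := A.state_mono μ hs
  rwa [A.state_smul_e μ s] at h1

theorem state_le_psub (μ : A.State) (x : A.carrier) : μ.1 x ≤ A.psub x := by
  apply le_csInf (A.psub_set_nonempty x)
  intro s hs
  have h1 := A.state_mono μ hs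
  rwa [A.state_smul_e μ s] at h1

theorem psub_le (μ : A.State) {x : A.carrier} {s : ℝ} (h : x ≤ s • A.e) :
    A.psub x ≤ s :=
  csInf_le (A.psub_set_bddBelow μ x) h

theorem le_of_psub_le (x : A.carrier) {s : ℝ} (h : A.psub x ≤ s) :
    x ≤ s • A.e := by
  have key : x - s • A.e ≤ (0 : A.carrier) := by
    apply A.arch
    intro t ht
    have h1 : A.psub x < s + t := lt_of_le_of_lt h (by linarith)
    obtain ⟨u, hu, hu2⟩ := exists_lt_of_csInf_lt (A.psub_set_nonempty x) h1
    have h2 : x ≤ (s + t) • A.e := le_trans hu (A.smul_e_mono (le_of_lt hu2))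
    apply A.le_of_sub_nonneg''
    have h3 : t • A.e - (x - s • A.e) = (s + t) • A.e - x := by
      rw [add_smul]; abel
    rw [h3]
    exact A.sub_nonneg_of_le' h2
  have h4 := A.sub_nonneg_of_le' key
  have h5 : (0 : A.carrier) - (x - s • A.e) = s • A.e - x := by abel
  rw [h5] at h4
  exact A.le_of_sub_nonneg'' h4

theorem psub_zero (μ : A.State) : A.psub 0 = 0 := by
  have h1 : A.psub 0 ≤ 0 := A.psub_le μ (by rw [zero_smul])
  have h2 := A.state_le_psub μ 0
  rw [map_zero] at h2
  linarith

theorem psub_add (μ : A.State) (x y : A.carrier) :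
    A.psub (x + y) ≤ A.psub x + A.psub y := by
  have key : ∀ s ∈ {r : ℝ | x ≤ r • A.e}, ∀ t ∈ {r : ℝ | y ≤ r • A.e},
      A.psub (x + y) ≤ s + t := by
    intro s hs t ht
    apply A.psub_le μ
    apply A.le_of_sub_nonneg''
    have h1 : (s + t) • A.e - (x + y) = (s • A.e - x) + (t • A.e - y) := by
      rw [add_smul]; abel
    rw [h1]
    have h2 := A.sub_nonneg_of_le' hs
    have h3 := A.sub_nonneg_of_le' ht
    have h4 := A.add_le_add_left' _ _ h3 (s • A.e - x)
    rw [add_zero] at h4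
    calc (0 : A.carrier) ≤ s • A.e - x := h2
      _ ≤ s • A.e - x + (t • A.e - y) := h4
  have step : ∀ s ∈ {r : ℝ | x ≤ r • A.e}, A.psub (x + y) ≤ s + A.psub y := by
    intro s hs
    have h1 : A.psub (x + y) - s ≤ A.psub y := by
      apply le_csInf (A.psub_set_nonempty y)
      intro t ht
      linarith [key s hs t ht]
    linarith
  have h2 : A.psub (x + y) - A.psub y ≤ A.psub x := by
    apply le_csInf (A.psub_set_nonempty x)
    intro s hs
    linarith [step s hs]
  linarith

theorem psub_smul (μ : A.State) (c : ℝ) (hc : 0 < c) (x : A.carrier) :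
    A.psub (c • x) = c * A.psub x := by
  have half : ∀ (d : ℝ), 0 < d → ∀ z : A.carrier, A.psub (d • z) ≤ d * A.psub z := by
    intro d hd z
    have h1 : A.psub (d • z) / d ≤ A.psub z := by
      apply le_csInf (A.psub_set_nonempty z)
      intro s hs
      have h2 : d • z ≤ (d * s) • A.e := by
        have := A.smul_mono' (le_of_lt hd) hs
        rwa [smul_smul] at this
      have h3 := A.psub_le μ h2
      rw [div_le_iff₀ hd]
      linarith [h3]
    calc A.psub (d • z) = A.psub (d • z) / d * d := by field_simp
      _ ≤ A.psub z * d := by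
          apply mul_le_mul_of_nonneg_right h1 (le_of_lt hd)
      _ = d * A.psub z := by ring
  have h1 := half c hc x
  have h2 := half c⁻¹ (by positivity) (c • x)
  rw [smul_smul, inv_mul_cancel₀ (ne_of_gt hc), one_smul] at h2
  have : c * A.psub x ≤ A.psub (c • x) := by
    have h3 : c * A.psub x ≤ c * (c⁻¹ * A.psub (c • x)) :=
      mul_le_mul_of_nonneg_left h2 (le_of_lt hc)
    rwa [← mul_assoc, mul_inv_cancel₀ (ne_of_gt hc), one_mul] at h3
  linarith

end OrderUnitSpace
end Helpers

section Helpers2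

namespace OrderUnitSpace

variable (A : OrderUnitSpace)

/-- Every nonnegative functional dominated by `psub` with value 1 at `e` is a state;
in fact any linear functional dominated by `psub` is a state. -/
theorem isState_of_le_psub (μ : A.State) (φ : A.carrier →ₗ[ℝ] ℝ)
    (hφ : ∀ x, φ x ≤ A.psub x) : A.IsState φ := by
  constructor
  · have h1 : φ A.e ≤ 1 := le_trans (hφ A.e) (A.psub_le μ (by rw [one_smul]))
    have h2 : φ (-A.e) ≤ -1 := by
      refine le_trans (hφ (-A.e)) (A.psub_le μ ?_)
      rw [neg_smul, one_smul]
    rw [map_neg] at h2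
    linarith
  · intro x hx
    have h1 : φ (-x) ≤ A.psub (-x) := hφ (-x)
    have h2 : A.psub (-x) ≤ 0 := by
      apply A.psub_le μ
      rw [zero_smul]
      have h7 := A.add_le_add_left' 0 x hx (-x)
      rw [add_zero, neg_add_cancel] at h7
      exact h7
    rw [map_neg] at h1
    linarith

/-- There is a state attaining (at least) `psub x`. -/
theorem exists_state_psub_le (μ : A.State) (x : A.carrier) :
    ∃ ν : A.State, A.psub x ≤ ν.1 x := by
  by_cases hx : x = 0
  · refine ⟨μ, ?_⟩
    rw [hx, map_zero, A.psub_zero μ]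
  · -- Hahn-Banach from the span of x
    set g : (Submodule.span ℝ ({x} : Set A.carrier)) →ₗ[ℝ] ℝ :=
      A.psub x • (LinearEquiv.coord ℝ A.carrier x hx).toLinearMap with hg
    have key : ∀ y : (Submodule.span ℝ ({x} : Set A.carrier)), g y ≤ A.psub y := by
      intro y
      set t := (LinearEquiv.coord ℝ A.carrier x hx) y with hty
      have hyt : (y : A.carrier) = t • x := (LinearEquiv.coord_apply_smul ℝ A.carrier x hx y).symm
      have hgy : g y = A.psub x * t := by
        simp [hg, mul_comm]
        exact Or.inl hty.symm
      rw [hgy, hyt]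
      rcases lt_trichotomy t 0 with h | h | h
      · have h1 : A.psub (t • x) = (-t) * A.psub (-x) := by
          have h2 : t • x = (-t) • (-x) := by rw [neg_smul, smul_neg, neg_neg]
          rw [h2, A.psub_smul μ (-t) (by linarith) (-x)]
        have h3 : 0 ≤ A.psub x + A.psub (-x) := by
          have h4 := A.psub_add μ x (-x)
          rw [add_neg_cancel, A.psub_zero μ] at h4
          linarith
        rw [h1]
        nlinarith
      · rw [h, zero_smul, A.psub_zero μ, mul_zero]
      · rw [A.psub_smul μ t h x, mul_comm]
    obtain ⟨φ, hφ1, hφ2⟩ := exists_extension_of_le_sublinear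
      ⟨Submodule.span ℝ ({x} : Set A.carrier), g⟩ A.psub
      (fun c hc z => A.psub_smul μ c hc z) (fun z w => A.psub_add μ z w) key
    refine ⟨⟨φ, A.isState_of_le_psub μ φ hφ2⟩, ?_⟩
    have hx_mem : x ∈ Submodule.span ℝ ({x} : Set A.carrier) :=
      Submodule.mem_span_singleton_self x
    have h1 : φ x = g ⟨x, hx_mem⟩ := hφ1 ⟨x, hx_mem⟩
    have h2 : g ⟨x, hx_mem⟩ = A.psub x := by
      simp [hg, LinearEquiv.coord_self]
    rw [h1, h2]

theorem onorm_set_nonempty (x : A.carrier) :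
    {r : ℝ | -(r • A.e) ≤ x ∧ x ≤ r • A.e}.Nonempty := by
  obtain ⟨r₁, h1⟩ := A.orderUnit x
  obtain ⟨r₂, h2⟩ := A.orderUnit (-x)
  refine ⟨max r₁ r₂, ?_, le_trans h1 (A.smul_e_mono (le_max_left _ _))⟩
  have h3 : -x ≤ max r₁ r₂ • A.e := le_trans h2 (A.smul_e_mono (le_max_right _ _))
  have h4 := A.sub_nonneg_of_le' h3
  have h5 : max r₁ r₂ • A.e - -x = x - -(max r₁ r₂ • A.e) := by abel
  rw [h5] at h4
  exact A.le_of_sub_nonneg'' h4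

theorem neg_le_neg'' {x y : A.carrier} (h : x ≤ y) : -y ≤ -x := by
  have h1 := A.sub_nonneg_of_le' h
  have h2 : y - x = -x - -y := by abel
  rw [h2] at h1
  exact A.le_of_sub_nonneg'' h1

theorem onorm_neg (x : A.carrier) : A.onorm (-x) = A.onorm x := by
  unfold onorm
  congr 1
  ext s
  constructor
  · rintro ⟨h1, h2⟩
    constructor
    · have := A.neg_le_neg'' h2
      rwa [neg_neg] at this
    · have := A.neg_le_neg'' h1
      simp only [neg_neg] at this
      exact this
  · rintro ⟨h1, h2⟩
    constructor
    · exact A.neg_le_neg'' h2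
    · have := A.neg_le_neg'' h1
      simp only [neg_neg] at this
      exact this

theorem state_abs_le_onorm (μ : A.State) (x : A.carrier) :
    |μ.1 x| ≤ A.onorm x := by
  apply le_csInf (A.onorm_set_nonempty x)
  intro r hr
  rw [abs_le]
  constructor
  · have h1 := A.state_mono μ hr.1
    rw [map_neg, A.state_smul_e μ r] at h1
    linarith
  · have h1 := A.state_mono μ hr.2
    rwa [A.state_smul_e μ r] at h1

end OrderUnitSpace
end Helpers2

section Helpers3

namespace OrderUnitSpace

variable (A : OrderUnitSpace)

theorem states_dist_le (L : Seminorm ℝ A.carrier) (hL : A.IsLipNorm L)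
    (r : ℝ) (hr0 : 0 ≤ r) (hr : A.radius L = ENNReal.ofReal r)
    (μ ν : A.State) (x : A.carrier) :
    |μ.1 x - ν.1 x| ≤ 2 * r * L x := by
  have hdiam : A.diam L = ENNReal.ofReal (2 * r) := by
    have h1 : A.diam L = A.diam L / 2 * 2 :=
      (ENNReal.div_mul_cancel (by norm_num) (by norm_num)).symm
    rw [h1, radius] at *
    rw [hr]
    rw [← ENNReal.ofReal_ofNat, ← ENNReal.ofReal_mul hr0]
    ring_nf
  have key : ∀ y : A.carrier, L y ≤ 1 → |μ.1 y - ν.1 y| ≤ 2 * r := by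
    intro y hy
    have h1 : ENNReal.ofReal |μ.1 y - ν.1 y| ≤ A.rho L μ ν :=
      le_iSup (fun a : {a : A.carrier // L a ≤ 1} =>
        ENNReal.ofReal |μ.1 a.1 - ν.1 a.1|) ⟨y, hy⟩
    have h2 : A.rho L μ ν ≤ A.diam L := by
      apply le_trans (le_iSup (fun ν' : A.State => A.rho L μ ν') ν)
      exact le_iSup (fun μ' : A.State => ⨆ ν' : A.State, A.rho L μ' ν') μ
    have h3 : ENNReal.ofReal |μ.1 y - ν.1 y| ≤ ENNReal.ofReal (2 * r) := by
      rw [← hdiam]; exact le_trans h1 h2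
    exact (ENNReal.ofReal_le_ofReal_iff (by linarith)).1 h3
  rcases eq_or_lt_of_le (apply_nonneg L x) with h | h
  · -- L x = 0, so x = t • e and μ x = ν x
    obtain ⟨t, ht⟩ := (hL.1 x).1 h.symm
    have e1 : μ.1 x = t := by rw [ht]; exact A.state_smul_e μ t
    have e2 : ν.1 x = t := by rw [ht]; exact A.state_smul_e ν t
    rw [e1, e2, sub_self, abs_zero]
    exact mul_nonneg (by positivity) (apply_nonneg L x)
  · have h1 := key ((L x)⁻¹ • x) (by
      rw [map_smul_eq_mul, Real.norm_eq_abs, abs_inv, abs_of_pos h,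
        inv_mul_cancel₀ (ne_of_gt h)])
    rw [map_smul, map_smul, smul_eq_mul, smul_eq_mul, ← mul_sub, abs_mul,
      abs_inv, abs_of_pos h] at h1
    rw [mul_comm] at h1
    have h2 := mul_le_mul_of_nonneg_right h1 (le_of_lt h)
    rw [mul_assoc, inv_mul_cancel₀ (ne_of_gt h), mul_one] at h2
    exact h2

end OrderUnitSpace
end Helpers3


/-- **Lemma 3.4 of Rieffel.** Let `(A, L)` be a compact quantum metric space of
radius `r` and let `π : A → B` be a morphism of order-unit spaces, where `B` has
at least one state. Then `‖a‖ ≤ ‖π(a)‖ + 2 r L(a)` for every `a ∈ A`. -/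
theorem onorm_le_onorm_image_add (A B : OrderUnitSpace)
    (L : Seminorm ℝ A.carrier) (hL : A.IsLipNorm L)
    (r : ℝ) (hr0 : 0 ≤ r) (hr : A.radius L = ENNReal.ofReal r)
    (f : A.carrier →ₗ[ℝ] B.carrier) (hf : A.IsMorphism B f)
    (hB : Nonempty B.State) (a : A.carrier) :
    A.onorm a ≤ B.onorm (f a) + 2 * r * L a := by
  obtain ⟨ν⟩ := hB
  set μ₀ : A.State := A.pullState B f hf ν with hμ₀
  -- the key bound for psub
  have key : ∀ x : A.carrier, A.psub x ≤ B.onorm (f x) + 2 * r * L x := by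
    intro x
    obtain ⟨μ, hμ⟩ := A.exists_state_psub_le μ₀ x
    have h1 : |μ.1 x - μ₀.1 x| ≤ 2 * r * L x :=
      A.states_dist_le L hL r hr0 hr μ μ₀ x
    have h2 : μ₀.1 x = ν.1 (f x) := rfl
    have h3 : |ν.1 (f x)| ≤ B.onorm (f x) := B.state_abs_le_onorm ν (f x)
    have h4 : μ.1 x ≤ μ₀.1 x + |μ.1 x - μ₀.1 x| := by
      have := le_abs_self (μ.1 x - μ₀.1 x); linarith
    rw [h2] at h1 h4
    have h5 : ν.1 (f x) ≤ |ν.1 (f x)| := le_abs_self _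
    linarith
  set c := B.onorm (f a) + 2 * r * L a with hc
  have h1 : A.psub a ≤ c := key a
  have h2 : A.psub (-a) ≤ c := by
    have := key (-a)
    rwa [map_neg, B.onorm_neg, map_neg_eq_map L] at this
  have h3 : a ≤ c • A.e := A.le_of_psub_le a h1
  have h4 : -a ≤ c • A.e := A.le_of_psub_le (-a) h2
  have h5 : -(c • A.e) ≤ a := by
    have h6 := A.sub_nonneg_of_le' h4
    have h7 : c • A.e - -a = a - -(c • A.e) := by abel
    rw [h7] at h6
    exact A.le_of_sub_nonneg'' h6
  exact csInf_le ⟨μ₀.1 a - 0, fun s hs => by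
      have := A.state_mono μ₀ hs.2
      rw [A.state_smul_e μ₀ s] at this
      linarith⟩ ⟨h5, h3⟩
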